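/- Let (Ω, μ) be a finite measure space, let 0 < ε ≤ 1, and let V : Ω → ℝ^{3×3} be measurable with det(I + εV(x)) = 1 for μ-a.e. x, ∫_Ω |V|² dμ ≤ C₁, and |εV(x)| ≤ C₂ for μ-a.e. x. Then there exists a constant C depending only on C₁ and C₂ (and not on ε, V, Ω) such that ∫_Ω |tr V| dμ ≤ C ε. -/

import Mathlib

open Matrix MeasureTheory

attribute [local instance] Matrix.frobeniusNormedAddCommGroup

lemma entry_abs_le_frobenius (A : Matrix (Fin 3) (Fin 3) ℝ) (i j : Fin 3) :
    |A i j| ≤ ‖A‖ := by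
  have hdef := Matrix.frobenius_norm_def A
  have hS : (|A i j|) ^ 2 ≤ ∑ k, ∑ l, ‖A k l‖ ^ (2 : ℝ) := by
    have h1 : (|A i j|) ^ 2 = ‖A i j‖ ^ (2 : ℝ) := by
      rw [Real.norm_eq_abs, Real.rpow_two]
    rw [h1]
    refine le_trans ?_ (Finset.single_le_sum (f := fun k => ∑ l, ‖A k l‖ ^ (2 : ℝ))
      (fun k _ => Finset.sum_nonneg fun l _ => by positivity) (Finset.mem_univ i))
    exact Finset.single_le_sum (f := fun l => ‖A i l‖ ^ (2 : ℝ))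
      (fun l _ => by positivity) (Finset.mem_univ j)
  calc |A i j| = Real.sqrt ((|A i j|) ^ 2) := (Real.sqrt_sq (abs_nonneg _)).symm
    _ ≤ Real.sqrt (∑ k, ∑ l, ‖A k l‖ ^ (2 : ℝ)) := Real.sqrt_le_sqrt hS
    _ = ‖A‖ := by rw [hdef, Real.sqrt_eq_rpow]

lemma pointwise_trace_bound (ε B : ℝ) (hε : 0 < ε) (W : Matrix (Fin 3) (Fin 3) ℝ)
    (hdet : (1 + ε • W).det = 1) (hB : ‖ε • W‖ ≤ B) :
    |W.trace| ≤ ε * (6 * (1 + B) * ‖W‖ ^ 2) := by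
  set M := ‖W‖ with hM
  have hM0 : 0 ≤ M := norm_nonneg _
  have hent : ∀ i j, |W i j| ≤ M := fun i j => entry_abs_le_frobenius W i j
  have hentB : ∀ i j, |ε * W i j| ≤ B := by
    intro i j
    have := entry_abs_le_frobenius (ε • W) i j
    simpa [Matrix.smul_apply, smul_eq_mul] using this.trans hB
  have hB0 : 0 ≤ B := (abs_nonneg _).trans (hentB 0 0)
  -- product bounds
  have hpair : ∀ i j k l : Fin 3, |W i j * W k l| ≤ M ^ 2 := by
    intro i j k l
    rw [abs_mul, sq]
    exact mul_le_mul (hent i j) (hent k l) (abs_nonneg _) hM0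
  have hdiff : ∀ i j k l i' j' k' l' : Fin 3,
      |W i j * W k l - W i' j' * W k' l'| ≤ 2 * M ^ 2 := by
    intro i j k l i' j' k' l'
    calc |W i j * W k l - W i' j' * W k' l'| ≤ |W i j * W k l| + |W i' j' * W k' l'| :=
          abs_sub _ _
      _ ≤ M ^ 2 + M ^ 2 := add_le_add (hpair _ _ _ _) (hpair _ _ _ _)
      _ = 2 * M ^ 2 := by ring
  -- expand the determinant
  rw [Matrix.det_fin_three] at hdet
  simp only [Matrix.add_apply, Matrix.smul_apply, Matrix.one_apply, smul_eq_mul] at hdet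
  norm_num [Fin.ext_iff] at hdet
  -- key identity
  have h1 : ε * W.trace = ε * (-(ε * ((W 0 0 * W 1 1 - W 0 1 * W 1 0)
      + (W 0 0 * W 2 2 - W 0 2 * W 2 0) + (W 1 1 * W 2 2 - W 1 2 * W 2 1)))
      - ε * ((ε * W 0 0) * (W 1 1 * W 2 2 - W 1 2 * W 2 1)
        - (ε * W 0 1) * (W 1 0 * W 2 2 - W 1 2 * W 2 0)
        + (ε * W 0 2) * (W 1 0 * W 2 1 - W 1 1 * W 2 0))) := by
    rw [Matrix.trace_fin_three]
    linear_combination hdet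
  have h2 := mul_left_cancel₀ (ne_of_gt hε) h1
  set Q := (W 0 0 * W 1 1 - W 0 1 * W 1 0) + (W 0 0 * W 2 2 - W 0 2 * W 2 0)
      + (W 1 1 * W 2 2 - W 1 2 * W 2 1) with hQdef
  set E := (ε * W 0 0) * (W 1 1 * W 2 2 - W 1 2 * W 2 1)
      - (ε * W 0 1) * (W 1 0 * W 2 2 - W 1 2 * W 2 0)
      + (ε * W 0 2) * (W 1 0 * W 2 1 - W 1 1 * W 2 0) with hEdef
  have hQ : |Q| ≤ 6 * M ^ 2 := by
    rw [hQdef]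
    refine (abs_add_three _ _ _).trans ?_
    have := hdiff 0 0 1 1 0 1 1 0
    have := hdiff 0 0 2 2 0 2 2 0
    have := hdiff 1 1 2 2 1 2 2 1
    linarith
  have hE : |E| ≤ 6 * B * M ^ 2 := by
    have t1 : |(ε * W 0 0) * (W 1 1 * W 2 2 - W 1 2 * W 2 1)| ≤ B * (2 * M ^ 2) := by
      rw [abs_mul]
      exact mul_le_mul (hentB 0 0) (hdiff 1 1 2 2 1 2 2 1) (abs_nonneg _) hB0
    have t2 : |(ε * W 0 1) * (W 1 0 * W 2 2 - W 1 2 * W 2 0)| ≤ B * (2 * M ^ 2) := by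
      rw [abs_mul]
      exact mul_le_mul (hentB 0 1) (hdiff 1 0 2 2 1 2 2 0) (abs_nonneg _) hB0
    have t3 : |(ε * W 0 2) * (W 1 0 * W 2 1 - W 1 1 * W 2 0)| ≤ B * (2 * M ^ 2) := by
      rw [abs_mul]
      exact mul_le_mul (hentB 0 2) (hdiff 1 0 2 1 1 1 2 0) (abs_nonneg _) hB0
    calc |E| ≤ |(ε * W 0 0) * (W 1 1 * W 2 2 - W 1 2 * W 2 1)|
          + |(ε * W 0 1) * (W 1 0 * W 2 2 - W 1 2 * W 2 0)|
          + |(ε * W 0 2) * (W 1 0 * W 2 1 - W 1 1 * W 2 0)| := by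
          rw [hEdef, sub_eq_add_neg]
          refine (abs_add_three _ _ _).trans ?_
          rw [abs_neg]
      _ ≤ 6 * B * M ^ 2 := by linarith
  calc |W.trace| = |(-(ε * Q)) - ε * E| := by rw [h2]
    _ ≤ |(-(ε * Q))| + |ε * E| := abs_sub _ _
    _ = ε * |Q| + ε * |E| := by rw [abs_neg, abs_mul, abs_mul, abs_of_pos hε]
    _ ≤ ε * (6 * M ^ 2) + ε * (6 * B * M ^ 2) :=
        add_le_add (mul_le_mul_of_nonneg_left hQ hε.le) (mul_le_mul_of_nonneg_left hE hε.le)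
    _ = ε * (6 * (1 + B) * M ^ 2) := by ring

/-- Incompressibility forces a small trace: there is a constant `C = C(C₁, C₂)` such that
whenever `0 < ε ≤ 1` and `V : Ω → ℝ^{3×3}` satisfies `det(I + εV) = 1` a.e.,
`∫|V|² ≤ C₁` and `|εV| ≤ C₂` a.e. on a finite measure space, then `∫|tr V| ≤ C ε`. -/
theorem trace_small_of_incompressible (C₁ C₂ : ℝ) :
    ∃ C : ℝ, ∀ (Ω : Type*) [MeasurableSpace Ω] (μ : Measure Ω), IsFiniteMeasure μ →
      ∀ (ε : ℝ), 0 < ε → ε ≤ 1 →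
      ∀ V : Ω → Matrix (Fin 3) (Fin 3) ℝ, MemLp V 2 μ →
        (∀ᵐ x ∂μ, (1 + ε • V x).det = 1) →
        (∫ x, ‖V x‖ ^ 2 ∂μ) ≤ C₁ →
        (∀ᵐ x ∂μ, ‖ε • V x‖ ≤ C₂) →
        (∫ x, |(V x).trace| ∂μ) ≤ C * ε := by
  refine ⟨6 * (1 + |C₂|) * C₁, ?_⟩
  intro Ω _ μ _ ε hε hε1 V hV hdet hint hCb
  have hC₁0 : 0 ≤ C₁ := le_trans (integral_nonneg fun x => by positivity) hint
  have hi : Integrable (fun x => ‖V x‖ ^ 2) μ := by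
    have h := hV.integrable_norm_rpow'
    simp only [ENNReal.toReal_ofNat] at h
    refine h.congr (Filter.Eventually.of_forall fun x => ?_)
    show ‖V x‖ ^ (2 : ℝ) = ‖V x‖ ^ (2 : ℕ)
    rw [Real.rpow_two]
  have hbound : ∀ᵐ x ∂μ, |(V x).trace| ≤ ε * (6 * (1 + |C₂|) * ‖V x‖ ^ 2) := by
    filter_upwards [hdet, hCb] with x hdx hcx
    exact pointwise_trace_bound ε |C₂| hε (V x) hdx (hcx.trans (le_abs_self C₂))
  calc (∫ x, |(V x).trace| ∂μ)
      ≤ ∫ x, ε * (6 * (1 + |C₂|) * ‖V x‖ ^ 2) ∂μ := by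
        refine integral_mono_of_nonneg (Filter.Eventually.of_forall fun x => abs_nonneg _) ?_ hbound
        exact (hi.const_mul _).const_mul _
    _ = ε * (6 * (1 + |C₂|)) * ∫ x, ‖V x‖ ^ 2 ∂μ := by
        rw [mul_assoc, ← integral_const_mul, ← integral_const_mul]
    _ ≤ ε * (6 * (1 + |C₂|)) * C₁ := by
        refine mul_le_mul_of_nonneg_left hint (by positivity)
    _ = 6 * (1 + |C₂|) * C₁ * ε := by ring
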